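/- The coherence of the K × N matrix A of Construction 1′ equals 1/√K; that is, |a_{n_1}^H · a_{n_2}| ≤ 1/√K for all distinct column indices n_1 ≠ n_2, and this bound is attained by some pair of distinct columns. -/

import Mathlib

open Complex Finset

/-- The canonical additive character of a finite field `F` of characteristic `p`:
`χ(y) = exp(2πi · Tr(y) / p) = ω_p^{Tr(y)}`, where `Tr : F → F_p` is the field trace. -/
noncomputable def addChar (p : ℕ) {F : Type*} [Field F] [Fintype F] [Algebra (ZMod p) F]
    (y : F) : ℂ :=
  Complex.exp (2 * Real.pi * Complex.I * ((Algebra.trace (ZMod p) F y).val : ℂ) / p)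

/-- `b_i` associated to the digit `u_i`: `b = 0` if `u = 0`, and `b = α^(u-1)` if `u ≥ 1`. -/
noncomputable def bOf {F : Type*} [Field F] (α : F) (u : ℕ) : F :=
  if u = 0 then 0 else α ^ (u - 1)

set_option linter.unusedSectionVars false

section Aux
variable (p : ℕ) [Fact p.Prime] {F : Type*} [Field F] [Fintype F] [Algebra (ZMod p) F]

lemma addChar_eq (y : F) :
    addChar p y = Complex.exp (((Algebra.trace (ZMod p) F y).val : ℂ) * (2 * Real.pi * Complex.I / p)) := by
  rw [addChar]; ring_nf

lemma exp_val_eq_one (t : ℕ) :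
    Complex.exp (((p * t : ℕ) : ℂ) * (2 * Real.pi * Complex.I / p)) = 1 := by
  have hp : (p : ℂ) ≠ 0 := by
    exact_mod_cast (Fact.out : p.Prime).ne_zero
  have : ((p * t : ℕ) : ℂ) * (2 * Real.pi * Complex.I / p) = (t : ℤ) * (2 * Real.pi * Complex.I) := by
    push_cast
    field_simp
  rw [this, Complex.exp_int_mul_two_pi_mul_I]

lemma addChar_zero : addChar p (0 : F) = 1 := by
  rw [addChar_eq]; simp

lemma addChar_add (x y : F) : addChar p (x + y) = addChar p x * addChar p y := by
  have : NeZero p := ⟨(Fact.out : p.Prime).ne_zero⟩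
  set a := Algebra.trace (ZMod p) F x with ha
  set b := Algebra.trace (ZMod p) F y with hb
  have hmap : Algebra.trace (ZMod p) F (x + y) = a + b := map_add _ _ _
  rw [addChar_eq, addChar_eq, addChar_eq, hmap, ← Complex.exp_add, ← add_mul]
  have hval : a.val + b.val = (a + b).val + p * ((a.val + b.val) / p) := by
    rw [ZMod.val_add]
    exact (Nat.mod_add_div (a.val + b.val) p).symm
  have hc : ((a.val : ℂ) + b.val) = ((a + b).val : ℂ) + ((p * ((a.val + b.val) / p) : ℕ) : ℂ) := by
    exact_mod_cast congrArg (Nat.cast : ℕ → ℂ) hval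
  rw [hc, add_mul, Complex.exp_add, exp_val_eq_one, mul_one]

lemma addChar_abs (x : F) : ‖addChar p x‖ = 1 := by
  have : addChar p x = Complex.exp ((((Algebra.trace (ZMod p) F x).val * (2 * Real.pi) / p : ℝ) : ℂ) * Complex.I) := by
    rw [addChar_eq]
    congr 1
    push_cast
    ring
  rw [this, Complex.norm_exp_ofReal_mul_I]

lemma addChar_conj (x : F) : (starRingEnd ℂ) (addChar p x) = addChar p (-x) := by
  have h1 : addChar p x * addChar p (-x) = 1 := by
    rw [← addChar_add, add_neg_cancel, addChar_zero]
  rw [eq_inv_of_mul_eq_one_right h1, Complex.inv_eq_conj (addChar_abs p x)]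

lemma addChar_exists_ne_one : ∃ y : F, addChar p y ≠ 1 := by
  have : FiniteDimensional (ZMod p) F := Module.Finite.of_basis (Module.finBasis (ZMod p) F)
  obtain ⟨y, hy⟩ := Algebra.trace_surjective (ZMod p) F 1
  refine ⟨y, ?_⟩
  rw [addChar_eq, hy]
  have hp1 : 1 < p := (Fact.out : p.Prime).one_lt
  rw [ZMod.val_one_eq_one_mod, Nat.mod_eq_of_lt hp1]
  intro h
  rw [Complex.exp_eq_one_iff] at h
  obtain ⟨n, hn⟩ := h
  have hp0 : (p : ℂ) ≠ 0 := Nat.cast_ne_zero.mpr (by omega)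
  have h2pi : (2 * Real.pi * Complex.I : ℂ) ≠ 0 := by
    simp [Real.pi_ne_zero, Complex.I_ne_zero]
  push_cast at hn
  field_simp at hn
  have h0 : (2 * Real.pi * Complex.I) * 1 = (2 * Real.pi * Complex.I) * ((n * p : ℤ) : ℂ) := by
    push_cast
    linear_combination (2 * Real.pi * Complex.I) * hn
  have h1 := mul_left_cancel₀ h2pi h0
  have h2 : (1 : ℤ) = n * p := by exact_mod_cast h1
  have : (p : ℤ) ∣ 1 := Dvd.intro n (by linarith)
  have := Int.le_of_dvd one_pos this
  omega

lemma addChar_sum_mul (c : F) (hc : c ≠ 0) : ∑ y : F, addChar p (c * y) = 0 := by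
  obtain ⟨y₀, hy₀⟩ := addChar_exists_ne_one p (F := F)
  have key : addChar p y₀ * ∑ y : F, addChar p (c * y) = ∑ y : F, addChar p (c * y) := by
    rw [Finset.mul_sum]
    calc ∑ y : F, addChar p y₀ * addChar p (c * y)
        = ∑ y : F, addChar p (c * (c⁻¹ * y₀ + y)) := by
          refine Finset.sum_congr rfl fun y _ => ?_
          rw [← addChar_add]
          congr 1
          field_simp
      _ = ∑ y : F, addChar p (c * y) :=
          Fintype.sum_equiv (Equiv.addLeft (c⁻¹ * y₀)) _ _ (fun y => rfl)
  have h2 : (addChar p y₀ - 1) * ∑ y : F, addChar p (c * y) = 0 := by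
    rw [sub_mul, one_mul, key, sub_self]
  rcases mul_eq_zero.mp h2 with h | h
  · exact absurd (by linear_combination h) hy₀
  · exact h

lemma addChar_quadsum (a b : F) (ha : a ≠ 0) (h2 : (2 : F) ≠ 0) :
    ‖∑ x : F, addChar p (a * x ^ 2 + b * x)‖ = Real.sqrt (Fintype.card F) := by
  set T := ∑ x : F, addChar p (a * x ^ 2 + b * x) with hT
  have hconj : (starRingEnd ℂ) T = ∑ x : F, addChar p (-(a * x ^ 2 + b * x)) := by
    rw [hT, map_sum]
    exact Finset.sum_congr rfl fun x _ => addChar_conj p _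
  have hmul : T * (starRingEnd ℂ) T = (Fintype.card F : ℂ) := by
    rw [hconj, hT, Finset.sum_mul_sum]
    have step1 : ∀ x y : F, addChar p (a * x ^ 2 + b * x) * addChar p (-(a * y ^ 2 + b * y))
        = addChar p (a * x ^ 2 + b * x - (a * y ^ 2 + b * y)) := by
      intro x y
      rw [← addChar_add]
      ring_nf
    calc ∑ x : F, ∑ y : F, addChar p (a * x ^ 2 + b * x) * addChar p (-(a * y ^ 2 + b * y))
        = ∑ x : F, ∑ y : F, addChar p (a * x ^ 2 + b * x - (a * y ^ 2 + b * y)) := by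
          exact Finset.sum_congr rfl fun x _ => Finset.sum_congr rfl fun y _ => step1 x y
      _ = ∑ y : F, ∑ x : F, addChar p (a * x ^ 2 + b * x - (a * y ^ 2 + b * y)) :=
          Finset.sum_comm
      _ = ∑ y : F, ∑ d : F, addChar p (a * d ^ 2 + b * d) * addChar p ((2 * a * d) * y) := by
          refine Finset.sum_congr rfl fun y _ => ?_
          refine (Fintype.sum_equiv (Equiv.addLeft y)
            (fun d => addChar p (a * d ^ 2 + b * d) * addChar p ((2 * a * d) * y))
            (fun x => addChar p (a * x ^ 2 + b * x - (a * y ^ 2 + b * y))) (fun d => ?_)).symm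
          simp only [Equiv.coe_addLeft]
          rw [← addChar_add]
          congr 1
          ring
      _ = ∑ d : F, ∑ y : F, addChar p (a * d ^ 2 + b * d) * addChar p ((2 * a * d) * y) :=
          Finset.sum_comm
      _ = ∑ d : F, addChar p (a * d ^ 2 + b * d) * ∑ y : F, addChar p ((2 * a * d) * y) := by
          exact Finset.sum_congr rfl fun d _ => (Finset.mul_sum _ _ _).symm
      _ = (Fintype.card F : ℂ) := by
          rw [Finset.sum_eq_single_of_mem 0 (Finset.mem_univ 0)]
          · simp [addChar_zero]
          · intro d _ hd
            rw [addChar_sum_mul p _ (by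
              exact mul_ne_zero (mul_ne_zero h2 ha) hd), mul_zero]
  have habs : ‖T‖ ^ 2 = (Fintype.card F : ℝ) := by
    have := Complex.mul_conj T
    rw [hmul] at this
    have h3 : Complex.normSq T = (Fintype.card F : ℝ) := by exact_mod_cast this.symm
    rw [Complex.sq_norm, h3]
  rw [← habs, Real.sqrt_sq (norm_nonneg T)]

end Aux

/-- The coherence of the Construction 1′ matrix equals `1/√K`: every pair of distinct
columns has inner product of magnitude at most `1/√K`, and this value is attained. -/
theorem construction1prime_coherence
    (p m : ℕ) [Fact p.Prime] (hodd : Odd p) (hm : 0 < m)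
    (K N : ℕ) (hK : K = p ^ m) (hN : N = K ^ 2)
    (F : Type*) [Field F] [Fintype F] [Algebra (ZMod p) F]
    (hcard : Fintype.card F = p ^ m)
    (α : F) (hα : ∀ x : F, x ≠ 0 → ∃ j : ℕ, α ^ j = x)
    (A : Matrix (Fin K) (Fin N) ℂ)
    (hA : ∀ (k : Fin K) (n : Fin N), A k n =
      if (k : ℕ) = 0 then ((Real.sqrt K : ℂ))⁻¹
      else ((Real.sqrt K : ℂ))⁻¹ * addChar p (bOf α ((n : ℕ) % K) * α ^ ((k : ℕ) - 1) +
        bOf α ((n : ℕ) / K) * α ^ (2 * ((k : ℕ) - 1))))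
    :
    (∀ n₁ n₂ : Fin N, n₁ ≠ n₂ →
      ‖∑ k : Fin K, (starRingEnd ℂ) (A k n₁) * A k n₂‖ ≤ 1 / Real.sqrt K) ∧
    (∃ n₁ n₂ : Fin N, n₁ ≠ n₂ ∧
      ‖∑ k : Fin K, (starRingEnd ℂ) (A k n₁) * A k n₂‖ = 1 / Real.sqrt K) := by
  classical
  have hp : p.Prime := Fact.out
  have hp3 : 3 ≤ p := by
    have h1 := hp.two_le
    have h2 := Nat.odd_iff.mp hodd
    omega
  have hKcard : Fintype.card F = K := by rw [hcard, hK]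
  have hKp : p ≤ K := by rw [hK]; exact Nat.le_self_pow hm.ne' p
  have hK3 : 3 ≤ K := le_trans hp3 hKp
  have hKpos : 0 < K := by omega
  have charF : CharP F p := charP_of_injective_ringHom (algebraMap (ZMod p) F).injective p
  have h2 : (2 : F) ≠ 0 := by
    intro h
    have hd : p ∣ 2 := (CharP.cast_eq_zero_iff F p 2).mp (by exact_mod_cast h)
    have := Nat.le_of_dvd (by norm_num) hd
    omega
  have hm1 : (-1 : F) ≠ 0 := neg_ne_zero.mpr one_ne_zero
  have hαne : α ≠ 0 := by
    intro h0
    obtain ⟨j, hj⟩ := hα (-1) hm1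
    rcases Nat.eq_zero_or_pos j with hj0 | hj0
    · rw [hj0, pow_zero] at hj
      exact h2 (by linear_combination hj)
    · rw [h0, zero_pow (by omega)] at hj
      exact hm1 hj.symm
  set αu : Fˣ := Units.mk0 α hαne with hαu
  have hunit : ∀ x : Fˣ, x ∈ Subgroup.zpowers αu := by
    intro x
    obtain ⟨j, hj⟩ := hα x.val x.ne_zero
    refine Subgroup.mem_zpowers_iff.mpr ⟨(j : ℤ), ?_⟩
    rw [zpow_natCast]
    ext
    rw [Units.val_pow_eq_pow_val]
    exact hj
  have horder : orderOf αu = K - 1 := by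
    rw [orderOf_eq_card_of_forall_mem_zpowers hunit, Nat.card_eq_fintype_card,
      Fintype.card_units, hKcard]
  have hpowinj : ∀ i j : ℕ, i < K - 1 → j < K - 1 → α ^ i = α ^ j → i = j := by
    intro i j hi hj hij
    have hu : αu ^ i = αu ^ j := by
      ext
      rw [Units.val_pow_eq_pow_val, Units.val_pow_eq_pow_val]
      exact hij
    exact pow_injOn_Iio_orderOf (by rw [horder]; exact hi) (by rw [horder]; exact hj) hu
  have hbinj : ∀ u v : ℕ, u < K → v < K → bOf α u = bOf α v → u = v := by
    intro u v hu hv h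
    rcases Nat.eq_zero_or_pos u with hu0 | hu0 <;> rcases Nat.eq_zero_or_pos v with hv0 | hv0
    · omega
    · exfalso
      rw [bOf, bOf, if_pos hu0, if_neg (by omega)] at h
      exact pow_ne_zero _ hαne h.symm
    · exfalso
      rw [bOf, bOf, if_neg (by omega), if_pos hv0] at h
      exact pow_ne_zero _ hαne h
    · rw [bOf, bOf, if_neg (by omega), if_neg (by omega)] at h
      have := hpowinj _ _ (by omega) (by omega) h
      omega
  have heinj : Function.Injective (fun k : Fin K => bOf α (k : ℕ)) := by
    intro k₁ k₂ h
    exact Fin.ext (hbinj _ _ k₁.isLt k₂.isLt h)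
  have hebij : Function.Bijective (fun k : Fin K => bOf α (k : ℕ)) :=
    (Fintype.bijective_iff_injective_and_card _).mpr ⟨heinj, by simp [hKcard]⟩
  have hKR : (0:ℝ) ≤ (K : ℝ) := by positivity
  have hsqR : Real.sqrt K * Real.sqrt K = (K : ℝ) := Real.mul_self_sqrt hKR
  have hsq : ((Real.sqrt K : ℂ)) * ((Real.sqrt K : ℂ)) = (K : ℂ) := by
    rw [← Complex.ofReal_mul, hsqR]
    norm_cast
  have hsqinv : ((Real.sqrt K : ℂ))⁻¹ * ((Real.sqrt K : ℂ))⁻¹ = ((K : ℕ) : ℂ)⁻¹ := by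
    rw [← mul_inv, hsq]
  have hsqrtpos : 0 < Real.sqrt K := Real.sqrt_pos.mpr (by exact_mod_cast hKpos)
  have hterm : ∀ (n₁ n₂ : Fin N) (k : Fin K),
      (starRingEnd ℂ) (A k n₁) * A k n₂ =
      ((K : ℕ) : ℂ)⁻¹ * addChar p
        ((bOf α ((n₂ : ℕ) / K) - bOf α ((n₁ : ℕ) / K)) * (bOf α (k : ℕ)) ^ 2
          + (bOf α ((n₂ : ℕ) % K) - bOf α ((n₁ : ℕ) % K)) * (bOf α (k : ℕ))) := by
    intro n₁ n₂ k
    rw [hA, hA]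
    by_cases hk : (k : ℕ) = 0
    · rw [if_pos hk, if_pos hk, map_inv₀, Complex.conj_ofReal, hsqinv]
      have : bOf α ((k : ℕ)) = 0 := by rw [bOf, if_pos hk]
      rw [this]
      ring_nf
      rw [addChar_zero, mul_one]
    · rw [if_neg hk, if_neg hk, map_mul, map_inv₀, Complex.conj_ofReal, addChar_conj]
      have hb : bOf α ((k : ℕ)) = α ^ ((k : ℕ) - 1) := by rw [bOf, if_neg hk]
      have h2j : α ^ (2 * ((k : ℕ) - 1)) = (α ^ ((k : ℕ) - 1)) ^ 2 := pow_mul' α 2 _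
      calc ((Real.sqrt K : ℂ))⁻¹ *
              addChar p (-(bOf α ((n₁ : ℕ) % K) * α ^ ((k : ℕ) - 1) +
                bOf α ((n₁ : ℕ) / K) * α ^ (2 * ((k : ℕ) - 1)))) *
            (((Real.sqrt K : ℂ))⁻¹ *
              addChar p (bOf α ((n₂ : ℕ) % K) * α ^ ((k : ℕ) - 1) +
                bOf α ((n₂ : ℕ) / K) * α ^ (2 * ((k : ℕ) - 1))))
          = (((Real.sqrt K : ℂ))⁻¹ * ((Real.sqrt K : ℂ))⁻¹) *
            (addChar p (-(bOf α ((n₁ : ℕ) % K) * α ^ ((k : ℕ) - 1) +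
                bOf α ((n₁ : ℕ) / K) * α ^ (2 * ((k : ℕ) - 1)))) *
              addChar p (bOf α ((n₂ : ℕ) % K) * α ^ ((k : ℕ) - 1) +
                bOf α ((n₂ : ℕ) / K) * α ^ (2 * ((k : ℕ) - 1)))) := by ring
        _ = ((K : ℕ) : ℂ)⁻¹ * addChar p
              ((bOf α ((n₂ : ℕ) / K) - bOf α ((n₁ : ℕ) / K)) * (bOf α (k : ℕ)) ^ 2
                + (bOf α ((n₂ : ℕ) % K) - bOf α ((n₁ : ℕ) % K)) * (bOf α (k : ℕ))) := by
            rw [hsqinv, ← addChar_add]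
            congr 1
            rw [hb, h2j]
            ring
  have M : ∀ n₁ n₂ : Fin N,
      (∑ k : Fin K, (starRingEnd ℂ) (A k n₁) * A k n₂) =
      ((K : ℕ) : ℂ)⁻¹ * ∑ x : F, addChar p
        ((bOf α ((n₂ : ℕ) / K) - bOf α ((n₁ : ℕ) / K)) * x ^ 2
          + (bOf α ((n₂ : ℕ) % K) - bOf α ((n₁ : ℕ) % K)) * x) := by
    intro n₁ n₂
    rw [Finset.mul_sum]
    calc (∑ k : Fin K, (starRingEnd ℂ) (A k n₁) * A k n₂)
        = ∑ k : Fin K, ((K : ℕ) : ℂ)⁻¹ * addChar p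
            ((bOf α ((n₂ : ℕ) / K) - bOf α ((n₁ : ℕ) / K)) * (bOf α (k : ℕ)) ^ 2
              + (bOf α ((n₂ : ℕ) % K) - bOf α ((n₁ : ℕ) % K)) * (bOf α (k : ℕ))) :=
          Finset.sum_congr rfl fun k _ => hterm n₁ n₂ k
      _ = ∑ x : F, ((K : ℕ) : ℂ)⁻¹ * addChar p
            ((bOf α ((n₂ : ℕ) / K) - bOf α ((n₁ : ℕ) / K)) * x ^ 2
              + (bOf α ((n₂ : ℕ) % K) - bOf α ((n₁ : ℕ) % K)) * x) :=
          Fintype.sum_bijective _ hebij _ _ (fun k => rfl)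
  have key : ∀ n₁ n₂ : Fin N,
      bOf α ((n₂ : ℕ) / K) - bOf α ((n₁ : ℕ) / K) ≠ 0 →
      ‖∑ k : Fin K, (starRingEnd ℂ) (A k n₁) * A k n₂‖ = 1 / Real.sqrt K := by
    intro n₁ n₂ hc2
    rw [M n₁ n₂, norm_mul, addChar_quadsum p _ _ hc2 h2, hKcard, norm_inv,
      Complex.norm_natCast, eq_div_iff (ne_of_gt hsqrtpos)]
    rw [mul_assoc, hsqR, inv_mul_cancel₀ (by positivity)]
  constructor
  · intro n₁ n₂ hne
    by_cases hc2 : bOf α ((n₂ : ℕ) / K) - bOf α ((n₁ : ℕ) / K) = 0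
    · by_cases hc1 : bOf α ((n₂ : ℕ) % K) - bOf α ((n₁ : ℕ) % K) = 0
      · exfalso
        apply hne
        have hmlt₁ : (n₁ : ℕ) % K < K := Nat.mod_lt _ hKpos
        have hmlt₂ : (n₂ : ℕ) % K < K := Nat.mod_lt _ hKpos
        have hdlt₁ : (n₁ : ℕ) / K < K :=
          Nat.div_lt_of_lt_mul (lt_of_lt_of_eq n₁.isLt (by rw [hN, sq]))
        have hdlt₂ : (n₂ : ℕ) / K < K :=
          Nat.div_lt_of_lt_mul (lt_of_lt_of_eq n₂.isLt (by rw [hN, sq]))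
        have e1 := hbinj _ _ hmlt₂ hmlt₁ (sub_eq_zero.mp hc1)
        have e2 := hbinj _ _ hdlt₂ hdlt₁ (sub_eq_zero.mp hc2)
        refine Fin.ext ?_
        calc (n₁ : ℕ) = K * ((n₁ : ℕ) / K) + (n₁ : ℕ) % K := (Nat.div_add_mod _ K).symm
          _ = K * ((n₂ : ℕ) / K) + (n₂ : ℕ) % K := by rw [e1, e2]
          _ = (n₂ : ℕ) := Nat.div_add_mod _ K
      · rw [M n₁ n₂]
        simp only [hc2, zero_mul, zero_add]
        rw [addChar_sum_mul p _ hc1, mul_zero]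
        simp only [norm_zero]
        positivity
    · exact le_of_eq (key n₁ n₂ hc2)
  · have hKN : K < N := by
      rw [hN, sq]
      exact (Nat.lt_mul_iff_one_lt_right hKpos).mpr (by omega)
    refine ⟨⟨0, by omega⟩, ⟨K, hKN⟩, Fin.ne_of_val_ne (by simp; omega), key _ _ ?_⟩
    simp only [Fin.val_mk]
    rw [Nat.div_self hKpos, Nat.zero_div]
    simp [bOf]
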